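/- arXiv:2110.15591 — 2 statements merged into one kernel-verified Lean document; each statement's English description precedes it below -/
import Mathlib

section
/- (Gale transform in the case m₂ = m₃ > m₁) Assume m₃ = m₂ > m₁. Define β : S → ℝ by β(u) = 0 for u ∈ V₁, β(u) = 1 for u ∈ V₂, and β(u) = −1 for u ∈ V₃. Then β satisfies Σ_{u∈S} β(u) = 0 and Σ_{u∈S} β(u)·u = 0, and every function c : S → ℝ satisfying Σ_{u∈S} c(u) = 0 and Σ_{u∈S} c(u)·u = 0 is a scalar multiple of β. -/
private lemma sum_split3 {α M : Type*} [AddCommMonoid M] [DecidableEq α]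
    {V1 V2 V3 S : Finset α} (hunion : V1 ∪ V2 ∪ V3 = S)
    (hd12 : Disjoint V1 V2) (hd13 : Disjoint V1 V3) (hd23 : Disjoint V2 V3)
    (F : α → M) :
    ∑ u ∈ S, F u = ∑ u ∈ V1, F u + ∑ u ∈ V2, F u + ∑ u ∈ V3, F u := by
  rw [← hunion, Finset.sum_union (Finset.disjoint_union_left.mpr ⟨hd13, hd23⟩),
    Finset.sum_union hd12]

theorem stmt_4
    (n : ℕ) (hn : 0 < n)
    (S V1 V2 V3 : Finset (Fin (2 * n) → ℝ))
    (h01 : ∀ v ∈ S, ∀ i, v i = 0 ∨ v i = 1)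
    (hScard : S.card = n + 2)
    (hunion : V1 ∪ V2 ∪ V3 = S)
    (hd12 : Disjoint V1 V2) (hd13 : Disjoint V1 V3) (hd23 : Disjoint V2 V3)
    (hne1 : V1.Nonempty) (hne2 : V2.Nonempty) (hne3 : V3.Nonempty)
    (hsum1 : ∑ v ∈ V1, v = fun _ => (1 : ℝ))
    (hsum2 : ∑ v ∈ V2, v = fun _ => (1 : ℝ))
    (hsum3 : ∑ v ∈ V3, v = fun _ => (1 : ℝ))
    (hspan : Module.finrank ℝ (Submodule.span ℝ (S : Set (Fin (2 * n) → ℝ))) = n)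
    (h23 : V3.card = V2.card) (h12 : V1.card < V2.card)
    : ∀ β : (Fin (2 * n) → ℝ) → ℝ,
      (∀ u ∈ V1, β u = 0) → (∀ u ∈ V2, β u = 1) → (∀ u ∈ V3, β u = -1) →
      (∑ u ∈ S, β u = 0 ∧ ∑ u ∈ S, β u • u = 0 ∧
        ∀ c : (Fin (2 * n) → ℝ) → ℝ, ∑ u ∈ S, c u = 0 → ∑ u ∈ S, c u • u = 0 →
          ∃ t : ℝ, ∀ u ∈ S, c u = t * β u) := by
  classical
  intro β hb1 hb2 hb3
  -- subsets of S
  have hsub1 : V1 ⊆ S := by rw [← hunion]; intro u hu; simp [hu]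
  have hsub2 : V2 ⊆ S := by rw [← hunion]; intro u hu; simp [hu]
  have hsub3 : V3 ⊆ S := by rw [← hunion]; intro u hu; simp [hu]
  -- the second dependence d
  set d : (Fin (2 * n) → ℝ) → ℝ := fun u => if u ∈ V1 then 1 else if u ∈ V2 then -1 else 0 with hd
  have hd1 : ∀ u ∈ V1, d u = 1 := fun u hu => if_pos hu
  have hd2 : ∀ u ∈ V2, d u = -1 := fun u hu => by
    simp only [hd]
    rw [if_neg (Finset.disjoint_right.mp hd12 hu), if_pos hu]
  have hd3 : ∀ u ∈ V3, d u = 0 := fun u hu => by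
    simp only [hd]
    rw [if_neg (Finset.disjoint_right.mp hd13 hu), if_neg (Finset.disjoint_right.mp hd23 hu)]
  -- sums of β
  have hβsum : ∑ u ∈ S, β u = 0 := by
    rw [sum_split3 hunion hd12 hd13 hd23,
      Finset.sum_congr rfl hb1, Finset.sum_congr rfl hb2, Finset.sum_congr rfl hb3]
    simp [h23]
  have hβvec : ∑ u ∈ S, β u • u = 0 := by
    rw [sum_split3 hunion hd12 hd13 hd23,
      Finset.sum_congr rfl (fun u hu => by rw [hb1 u hu, zero_smul] :
        ∀ u ∈ V1, β u • u = 0),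
      Finset.sum_congr rfl (fun u hu => by rw [hb2 u hu, one_smul] :
        ∀ u ∈ V2, β u • u = u),
      Finset.sum_congr rfl (fun u hu => by rw [hb3 u hu, neg_smul, one_smul] :
        ∀ u ∈ V3, β u • u = -u)]
    rw [Finset.sum_const_zero, Finset.sum_neg_distrib, hsum2, hsum3]
    simp
  -- sums of d
  have hdsum : ∑ u ∈ S, d u = (V1.card : ℝ) - V2.card := by
    rw [sum_split3 hunion hd12 hd13 hd23,
      Finset.sum_congr rfl hd1, Finset.sum_congr rfl hd2, Finset.sum_congr rfl hd3]
    simp [sub_eq_add_neg]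
  have hdvec : ∑ u ∈ S, d u • u = 0 := by
    rw [sum_split3 hunion hd12 hd13 hd23,
      Finset.sum_congr rfl (fun u hu => by rw [hd1 u hu, one_smul] :
        ∀ u ∈ V1, d u • u = u),
      Finset.sum_congr rfl (fun u hu => by rw [hd2 u hu, neg_smul, one_smul] :
        ∀ u ∈ V2, d u • u = -u),
      Finset.sum_congr rfl (fun u hu => by rw [hd3 u hu, zero_smul] :
        ∀ u ∈ V3, d u • u = 0)]
    rw [Finset.sum_const_zero, Finset.sum_neg_distrib, hsum1, hsum2]
    simp
  refine ⟨hβsum, hβvec, ?_⟩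
  -- the linear map
  set T : (↥S → ℝ) →ₗ[ℝ] (Fin (2 * n) → ℝ) := Fintype.linearCombination ℝ (fun u : ↥S => (u : Fin (2 * n) → ℝ)) with hT
  have hTapp : ∀ f : (Fin (2 * n) → ℝ) → ℝ, T (fun u : ↥S => f ↑u) = ∑ u ∈ S, f u • u := by
    intro f
    rw [hT, Fintype.linearCombination_apply]
    exact Finset.sum_coe_sort S (fun u => f u • u)
  have hrange : LinearMap.range T = Submodule.span ℝ (S : Set (Fin (2 * n) → ℝ)) := by
    rw [hT, Fintype.range_linearCombination]
    congr 1
    exact Subtype.range_coe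
  have hkerdim : Module.finrank ℝ (LinearMap.ker T) = 2 := by
    have h1 := LinearMap.finrank_range_add_finrank_ker T
    rw [hrange, hspan] at h1
    have h2 : Module.finrank ℝ (↥S → ℝ) = n + 2 := by
      rw [Module.finrank_fintype_fun_eq_card, Fintype.card_coe, hScard]
    rw [h2] at h1
    omega
  set β₀ : ↥S → ℝ := fun u => β ↑u with hβ₀
  set d₀ : ↥S → ℝ := fun u => d ↑u with hd₀
  have hβker : β₀ ∈ LinearMap.ker T := by
    rw [LinearMap.mem_ker, hβ₀, hTapp]; exact hβvec
  have hdker : d₀ ∈ LinearMap.ker T := by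
    rw [LinearMap.mem_ker, hd₀, hTapp]; exact hdvec
  obtain ⟨u1, hu1⟩ := hne1
  obtain ⟨u2, hu2⟩ := hne2
  -- linear independence of β₀, d₀
  have hli : LinearIndependent ℝ ![β₀, d₀] := by
    rw [LinearIndependent.pair_iff]
    intro s t hst
    have e1 := congrFun hst ⟨u1, hsub1 hu1⟩
    have e2 := congrFun hst ⟨u2, hsub2 hu2⟩
    simp only [Pi.add_apply, Pi.smul_apply, Pi.zero_apply, smul_eq_mul, hβ₀, hd₀] at e1 e2
    rw [hb1 u1 hu1, hd1 u1 hu1] at e1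
    rw [hb2 u2 hu2, hd2 u2 hu2] at e2
    constructor <;> linarith
  have hspan2 : Submodule.span ℝ {β₀, d₀} = LinearMap.ker T := by
    apply Submodule.eq_of_le_of_finrank_le
    · rw [Submodule.span_le]
      intro x hx
      rcases hx with h | h
      · exact h ▸ hβker
      · simp only [Set.mem_singleton_iff] at h; exact h ▸ hdker
    · rw [hkerdim]
      have hr : Set.range ![β₀, d₀] = {β₀, d₀} := by
        ext x; simp [Fin.exists_fin_two, or_comm]
      have := finrank_span_eq_card hli
      rw [hr] at this
      rw [this]
      simp
  -- main conclusion
  intro c hc0 hcvec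
  have hcker : (fun u : ↥S => c ↑u) ∈ LinearMap.ker T := by
    rw [LinearMap.mem_ker, hTapp]; exact hcvec
  rw [← hspan2, Submodule.mem_span_pair] at hcker
  obtain ⟨a, b, hab⟩ := hcker
  have hpt : ∀ u ∈ S, c u = a * β u + b * d u := by
    intro u hu
    have := congrFun hab ⟨u, hu⟩
    simp only [Pi.add_apply, Pi.smul_apply, smul_eq_mul, hβ₀, hd₀] at this
    exact this.symm
  have hsum : ∑ u ∈ S, c u = a * (∑ u ∈ S, β u) + b * (∑ u ∈ S, d u) := by
    rw [Finset.sum_congr rfl hpt, Finset.sum_add_distrib, Finset.mul_sum, Finset.mul_sum]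
  rw [hc0, hβsum, hdsum] at hsum
  have hb0 : b = 0 := by
    have hlt : (V1.card : ℝ) < V2.card := by exact_mod_cast h12
    have : b * ((V1.card : ℝ) - V2.card) = 0 := by linarith
    rcases mul_eq_zero.mp this with h | h
    · exact h
    · linarith
  exact ⟨a, fun u hu => by rw [hpt u hu, hb0]; ring⟩
end

section
/- (Face characterization, case m₃ = m₂ > m₁ ≥ 2) Assume m₃ = m₂ > m₁ ≥ 2. Then for every nonempty subset F ⊆ S with F ≠ S, the convex hull of F is an extreme subset of the convex hull of S if and only if either (V₂ ⊄ F and V₃ ⊄ F) or V₂ ∪ V₃ ⊆ F. -/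
open Finset Module

private lemma hullmem {E : Type*} [AddCommGroup E] [Module ℝ E] (F : Finset E) (w : E → ℝ)
    (h0 : ∀ v ∈ F, 0 ≤ w v) (h1 : ∑ v ∈ F, w v = 1) :
    ∑ v ∈ F, w v • v ∈ convexHull ℝ (F : Set E) := by
  have h := Finset.centerMass_eq_of_sum_1 F id h1
  simp only [id] at h
  rw [← h]
  exact F.centerMass_mem_convexHull h0 (h1 ▸ one_pos) (fun i hi => Finset.mem_coe.mpr hi)

private lemma hullrep {E : Type*} [AddCommGroup E] [Module ℝ E] {F : Finset E} {x : E}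
    (hx : x ∈ convexHull ℝ (F : Set E)) :
    ∃ w : E → ℝ, (∀ v ∈ F, 0 ≤ w v) ∧ ∑ v ∈ F, w v = 1 ∧ ∑ v ∈ F, w v • v = x := by
  rw [Finset.convexHull_eq] at hx
  obtain ⟨w, h0, h1, hc⟩ := hx
  refine ⟨w, h0, h1, ?_⟩
  have h := Finset.centerMass_eq_of_sum_1 F id h1
  simp only [id] at h
  rw [← h, hc]


private lemma key_dep
    (n : ℕ)
    (S V1 V2 V3 : Finset (Fin (2 * n) → ℝ))
    (hScard : S.card = n + 2)
    (hunion : V1 ∪ V2 ∪ V3 = S)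
    (hd12 : Disjoint V1 V2) (hd13 : Disjoint V1 V3) (hd23 : Disjoint V2 V3)
    (hne2 : V2.Nonempty) (hne3 : V3.Nonempty)
    (hsum1 : ∑ v ∈ V1, v = fun _ => (1 : ℝ))
    (hsum2 : ∑ v ∈ V2, v = fun _ => (1 : ℝ))
    (hsum3 : ∑ v ∈ V3, v = fun _ => (1 : ℝ))
    (hspan : Module.finrank ℝ (Submodule.span ℝ (S : Set (Fin (2 * n) → ℝ))) = n)
    (h12 : V1.card < V2.card) (h23 : V3.card = V2.card)
    (α : (Fin (2 * n) → ℝ) → ℝ)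
    (hα0 : ∑ v ∈ S, α v • v = 0) (hαs : ∑ v ∈ S, α v = 0) :
    ∃ c : ℝ, ∀ v ∈ S, α v = if v ∈ V2 then c else if v ∈ V3 then -c else 0 := by
  have hd : Disjoint (V1 ∪ V2) V3 := Finset.disjoint_union_left.mpr ⟨hd13, hd23⟩
  have hsub1 : V1 ⊆ S := by rw [← hunion]; intro v hv; simp [hv]
  have hsub2 : V2 ⊆ S := by rw [← hunion]; intro v hv; simp [hv]
  have hsub3 : V3 ⊆ S := by rw [← hunion]; intro v hv; simp [hv]
  set ρ2 : (Fin (2 * n) → ℝ) → ℝ :=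
    fun v => if v ∈ V1 then 1 else if v ∈ V2 then -1 else 0 with hρ2
  set ρ3 : (Fin (2 * n) → ℝ) → ℝ :=
    fun v => if v ∈ V1 then 1 else if v ∈ V3 then -1 else 0 with hρ3
  set T := Fintype.linearCombination ℝ (fun v : ↥S => (v : Fin (2 * n) → ℝ)) with hT
  set r2 : ↥S → ℝ := fun v => ρ2 ↑v with hr2
  set r3 : ↥S → ℝ := fun v => ρ3 ↑v with hr3
  have hrange : LinearMap.range T = Submodule.span ℝ (S : Set (Fin (2 * n) → ℝ)) := by
    rw [hT, Fintype.range_linearCombination]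
    congr 1
    exact Subtype.range_coe
  have hkerfr : finrank ℝ (LinearMap.ker T) = 2 := by
    have h := LinearMap.finrank_range_add_finrank_ker T
    rw [hrange, hspan, Module.finrank_fintype_fun_eq_card, Fintype.card_coe, hScard] at h
    omega
  have hTapp : ∀ f : ↥S → ℝ, T f = ∑ v : ↥S, f v • (v : Fin (2 * n) → ℝ) := fun f => rfl
  have hT2 : T r2 = 0 := by
    rw [hTapp]
    have : ∑ v : ↥S, r2 v • (v : Fin (2 * n) → ℝ) = ∑ v ∈ S, ρ2 v • v :=
      Finset.sum_coe_sort S (fun v => ρ2 v • v)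
    rw [this, ← hunion, Finset.sum_union hd, Finset.sum_union hd12]
    have e1 : ∑ v ∈ V1, ρ2 v • v = ∑ v ∈ V1, v :=
      Finset.sum_congr rfl (fun v hv => by simp [hρ2, hv])
    have e2 : ∑ v ∈ V2, ρ2 v • v = -∑ v ∈ V2, v := by
      rw [← Finset.sum_neg_distrib]
      refine Finset.sum_congr rfl (fun v hv => ?_)
      have h1 : v ∉ V1 := Finset.disjoint_right.mp hd12 hv
      simp [hρ2, hv, h1]
    have e3 : ∑ v ∈ V3, ρ2 v • v = 0 := by
      refine Finset.sum_eq_zero (fun v hv => ?_)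
      have h1 : v ∉ V1 := Finset.disjoint_right.mp hd13 hv
      have h2 : v ∉ V2 := Finset.disjoint_right.mp hd23 hv
      simp [hρ2, h1, h2]
    rw [e1, e2, e3, hsum1, hsum2]
    simp
  have hT3 : T r3 = 0 := by
    rw [hTapp]
    have : ∑ v : ↥S, r3 v • (v : Fin (2 * n) → ℝ) = ∑ v ∈ S, ρ3 v • v :=
      Finset.sum_coe_sort S (fun v => ρ3 v • v)
    rw [this, ← hunion, Finset.sum_union hd, Finset.sum_union hd12]
    have e1 : ∑ v ∈ V1, ρ3 v • v = ∑ v ∈ V1, v :=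
      Finset.sum_congr rfl (fun v hv => by simp [hρ3, hv])
    have e2 : ∑ v ∈ V2, ρ3 v • v = 0 := by
      refine Finset.sum_eq_zero (fun v hv => ?_)
      have h1 : v ∉ V1 := Finset.disjoint_right.mp hd12 hv
      have h2 : v ∉ V3 := Finset.disjoint_left.mp hd23 hv
      simp [hρ3, h1, h2]
    have e3 : ∑ v ∈ V3, ρ3 v • v = -∑ v ∈ V3, v := by
      rw [← Finset.sum_neg_distrib]
      refine Finset.sum_congr rfl (fun v hv => ?_)
      have h1 : v ∉ V1 := Finset.disjoint_right.mp hd13 hv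
      simp [hρ3, hv, h1]
    rw [e1, e2, e3, hsum1, hsum3]
    simp
  obtain ⟨v2, hv2⟩ := hne2
  obtain ⟨v3, hv3⟩ := hne3
  have hv2n1 : v2 ∉ V1 := Finset.disjoint_right.mp hd12 hv2
  have hv3n1 : v3 ∉ V1 := Finset.disjoint_right.mp hd13 hv3
  have hv3n2 : v3 ∉ V2 := Finset.disjoint_right.mp hd23 hv3
  have hv2n3 : v2 ∉ V3 := Finset.disjoint_left.mp hd23 hv2
  have hind : LinearIndependent ℝ ![r2, r3] := by
    rw [LinearIndependent.pair_iff]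
    intro s t hst
    have e2 := congrFun hst ⟨v2, hsub2 hv2⟩
    have e3 := congrFun hst ⟨v3, hsub3 hv3⟩
    simp [hr2, hr3, hρ2, hρ3, hv2, hv3, hv2n1, hv3n1, hv3n2, hv2n3] at e2 e3
    exact ⟨e2, e3⟩
  have hpair : Submodule.span ℝ {r2, r3} = LinearMap.ker T := by
    apply Submodule.eq_of_le_of_finrank_eq
    · rw [Submodule.span_le]
      intro x hx
      rcases hx with rfl | hx
      · exact LinearMap.mem_ker.mpr hT2
      · rw [Set.mem_singleton_iff] at hx
        subst hx
        exact LinearMap.mem_ker.mpr hT3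
    · rw [hkerfr]
      have hr : ({r2, r3} : Set (↥S → ℝ)) = Set.range ![r2, r3] := by
        ext x
        simp [Fin.exists_fin_two, eq_comm, or_comm]
      rw [hr, finrank_span_eq_card hind, Fintype.card_fin]
  have hmem : (fun v : ↥S => α ↑v) ∈ Submodule.span ℝ ({r2, r3} : Set (↥S → ℝ)) := by
    rw [hpair, LinearMap.mem_ker, hTapp]
    rw [Finset.sum_coe_sort S (fun v => α v • v)]
    exact hα0
  obtain ⟨a, b, hab⟩ := Submodule.mem_span_pair.mp hmem
  have hval : ∀ v ∈ S, α v = a * ρ2 v + b * ρ3 v := by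
    intro v hv
    have := congrFun hab ⟨v, hv⟩
    simpa [hr2, hr3] using this.symm
  have hsum : (a + b) * (V1.card : ℝ) - a * V2.card - b * V3.card = 0 := by
    have e : ∑ v ∈ S, α v
        = ∑ v ∈ V1, (a + b) + ∑ v ∈ V2, (-a) + ∑ v ∈ V3, (-b) := by
      rw [← hunion, Finset.sum_union hd, Finset.sum_union hd12]
      congr 1
      congr 1
      · refine Finset.sum_congr rfl (fun v hv => ?_)
        rw [hval v (hsub1 hv)]
        simp [hρ2, hρ3, hv]
      · refine Finset.sum_congr rfl (fun v hv => ?_)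
        rw [hval v (hsub2 hv)]
        have h1 : v ∉ V1 := Finset.disjoint_right.mp hd12 hv
        have h3 : v ∉ V3 := Finset.disjoint_left.mp hd23 hv
        simp [hρ2, hρ3, hv, h1, h3]
      · refine Finset.sum_congr rfl (fun v hv => ?_)
        rw [hval v (hsub3 hv)]
        have h1 : v ∉ V1 := Finset.disjoint_right.mp hd13 hv
        have h2 : v ∉ V2 := Finset.disjoint_right.mp hd23 hv
        simp [hρ2, hρ3, hv, h1, h2]
    rw [hαs] at e
    simp [Finset.sum_const, nsmul_eq_mul] at e
    linarith [e]
  have hb : b = -a := by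
    rw [h23] at hsum
    have hne : (V1.card : ℝ) - V2.card ≠ 0 := by
      have : (V1.card : ℝ) < V2.card := by exact_mod_cast h12
      linarith
    have : (a + b) * ((V1.card : ℝ) - V2.card) = 0 := by ring_nf; ring_nf at hsum; linarith
    rcases mul_eq_zero.mp this with h | h
    · linarith
    · exact absurd h hne
  refine ⟨-a, fun v hv => ?_⟩
  rw [hval v hv]
  rw [← hunion] at hv
  rcases Finset.mem_union.mp hv with hv' | hv'
  · rcases Finset.mem_union.mp hv' with h1 | h2
    · have hn2 : v ∉ V2 := Finset.disjoint_left.mp hd12 h1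
      have hn3 : v ∉ V3 := Finset.disjoint_left.mp hd13 h1
      simp [hρ2, hρ3, h1, hn2, hn3, hb]

    · have hn1 : v ∉ V1 := Finset.disjoint_right.mp hd12 h2
      have hn3 : v ∉ V3 := Finset.disjoint_left.mp hd23 h2
      simp [hρ2, hρ3, h2, hn1, hn3, hb]

  · have hn1 : v ∉ V1 := Finset.disjoint_right.mp hd13 hv'
    have hn2 : v ∉ V2 := Finset.disjoint_right.mp hd23 hv'
    simp [hρ2, hρ3, hv', hn1, hn2, hb]
private lemma side
    {E : Type*} [AddCommGroup E] [Module ℝ E] [DecidableEq E]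
    (S F A B : Finset E) (hFS : F ⊆ S) (hBS : B ⊆ S) (hAF : A ⊆ F)
    (hdAB : Disjoint A B)
    (hBcard : 3 ≤ B.card) (hABcard : A.card = B.card)
    (hsA : ∑ v ∈ A, v = ∑ v ∈ B, v)
    (key : ∀ α : E → ℝ, ∑ v ∈ S, α v • v = 0 → ∑ v ∈ S, α v = 0 →
      ∃ c : ℝ, ∀ v ∈ S, α v = if v ∈ A then c else if v ∈ B then -c else 0)
    (w : E) (hwB : w ∈ B) (hwF : w ∉ F) :
    ¬ IsExtreme ℝ (convexHull ℝ (S : Set E)) (convexHull ℝ (F : Set E)) := by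
  intro hext
  have hwS : w ∈ S := hBS hwB
  set m := B.card with hmdef
  have hm0 : (0:ℝ) < m := by
    have : 0 < m := by omega
    exact_mod_cast this
  have hm1 : (0:ℝ) < (m:ℝ) - 1 := by
    have : (3:ℝ) ≤ m := by exact_mod_cast hBcard
    linarith
  set p : E := (m:ℝ)⁻¹ • ∑ v ∈ B, v with hp
  set q : E := ((m:ℝ) - 1)⁻¹ • ∑ v ∈ B.erase w, v with hq
  have hpF : p ∈ convexHull ℝ (F : Set E) := by
    apply convexHull_mono (Finset.coe_subset.mpr hAF)
    have h := hullmem A (fun _ => (m:ℝ)⁻¹) (fun v _ => by positivity)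
      (by rw [Finset.sum_const, nsmul_eq_mul, hABcard]; field_simp)
    have e : ∑ v ∈ A, (m:ℝ)⁻¹ • v = p := by
      rw [← Finset.smul_sum, hsA]
    rwa [e] at h
  have hwH : w ∈ convexHull ℝ (S : Set E) := subset_convexHull ℝ _ (Finset.mem_coe.mpr hwS)
  have herase : (B.erase w).card = m - 1 := Finset.card_erase_of_mem hwB
  have hqS : q ∈ convexHull ℝ (S : Set E) := by
    apply convexHull_mono (Finset.coe_subset.mpr ((Finset.erase_subset _ _).trans hBS))
    have h := hullmem (B.erase w) (fun _ => ((m:ℝ) - 1)⁻¹) (fun v _ => by positivity)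
      (by
        rw [Finset.sum_const, nsmul_eq_mul, herase]
        have : ((m - 1 : ℕ) : ℝ) = (m:ℝ) - 1 := by
          have : 1 ≤ m := by omega
          push_cast [this]
          ring
        rw [this]
        field_simp)
    have e : ∑ v ∈ B.erase w, ((m:ℝ) - 1)⁻¹ • v = q := by
      rw [← Finset.smul_sum]
    rwa [e] at h
  have hseg : p ∈ openSegment ℝ w q := by
    refine ⟨(m:ℝ)⁻¹, 1 - (m:ℝ)⁻¹, by positivity, ?_, by ring, ?_⟩
    · have : (m:ℝ)⁻¹ < 1 := by
        rw [inv_lt_one_iff₀]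
        right
        linarith
      linarith
    · rw [hq, smul_smul]
      have e1 : (1 - (m:ℝ)⁻¹) * ((m:ℝ) - 1)⁻¹ = (m:ℝ)⁻¹ := by
        have hmne : (m:ℝ) ≠ 0 := ne_of_gt hm0
        have hm1ne : (m:ℝ) - 1 ≠ 0 := ne_of_gt hm1
        field_simp
      rw [e1, hp]
      have e2 : ∑ v ∈ B, v = w + ∑ v ∈ B.erase w, v :=
        (Finset.add_sum_erase B (fun v => v) hwB).symm
      rw [e2, smul_add]
  have hwconv : w ∈ convexHull ℝ (F : Set E) := hext.2 hwH hqS hpF hseg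
  obtain ⟨μ, hμ0, hμ1, hμe⟩ := hullrep hwconv
  set α : E → ℝ := fun v => (if v ∈ F then μ v else 0) - (if v = w then 1 else 0) with hα
  have e1 : ∑ v ∈ S, (if v ∈ F then μ v else 0) • v = ∑ v ∈ F, μ v • v := by
    rw [← Finset.sum_subset hFS (fun v _ hvF => by simp [hvF])]
    exact Finset.sum_congr rfl (fun v hv => by simp [hv])
  have e1' : ∑ v ∈ S, (if v ∈ F then μ v else 0) = ∑ v ∈ F, μ v := by
    rw [← Finset.sum_subset hFS (fun v _ hvF => by simp [hvF])]
    exact Finset.sum_congr rfl (fun v hv => by simp [hv])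
  have e2 : ∑ v ∈ S, (if v = w then (1:ℝ) else 0) • v = w := by
    simp only [ite_smul, one_smul, zero_smul]
    rw [Finset.sum_ite_eq' S w (fun v => v)]
    simp [hwS]
  have e2' : ∑ v ∈ S, (if v = w then (1:ℝ) else 0) = 1 := by
    rw [Finset.sum_ite_eq' S w (fun _ => (1:ℝ))]
    simp [hwS]
  obtain ⟨c, hc⟩ := key α
    (by simp only [hα, sub_smul, Finset.sum_sub_distrib, e1, e2, hμe, sub_self])
    (by simp only [hα, Finset.sum_sub_distrib, e1', e2', hμ1, sub_self])
  have hwA : w ∉ A := Finset.disjoint_right.mp hdAB hwB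
  have hcw := hc w hwS
  rw [hα] at hcw
  simp [hwF, hwA, hwB] at hcw
  obtain ⟨u, hu⟩ : (B.erase w).Nonempty := by
    rw [← Finset.card_pos, herase]
    omega
  have huB : u ∈ B := Finset.mem_of_mem_erase hu
  have hune : u ≠ w := Finset.ne_of_mem_erase hu
  have huA : u ∉ A := Finset.disjoint_right.mp hdAB huB
  have hcu := hc u (hBS huB)
  simp only [hα, if_neg hune, if_neg huA, if_pos huB, sub_zero] at hcu
  have hge : (0:ℝ) ≤ (if u ∈ F then μ u else 0) := by
    by_cases huF : u ∈ F
    · simpa [huF] using hμ0 u huF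
    · simp [huF]
  rw [hcu, ← hcw] at hge
  linarith

theorem stmt_10
    (n : ℕ) (hn : 0 < n)
    (S V1 V2 V3 : Finset (Fin (2 * n) → ℝ))
    (h01 : ∀ v ∈ S, ∀ i, v i = 0 ∨ v i = 1)
    (hScard : S.card = n + 2)
    (hunion : V1 ∪ V2 ∪ V3 = S)
    (hd12 : Disjoint V1 V2) (hd13 : Disjoint V1 V3) (hd23 : Disjoint V2 V3)
    (hne1 : V1.Nonempty) (hne2 : V2.Nonempty) (hne3 : V3.Nonempty)
    (hsum1 : ∑ v ∈ V1, v = fun _ => (1 : ℝ))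
    (hsum2 : ∑ v ∈ V2, v = fun _ => (1 : ℝ))
    (hsum3 : ∑ v ∈ V3, v = fun _ => (1 : ℝ))
    (hspan : Module.finrank ℝ (Submodule.span ℝ (S : Set (Fin (2 * n) → ℝ))) = n)
    (hm1 : 2 ≤ V1.card) (h12 : V1.card < V2.card) (h23 : V3.card = V2.card)
    : ∀ F ⊆ S, F.Nonempty → F ≠ S →
      (IsExtreme ℝ (convexHull ℝ (S : Set (Fin (2 * n) → ℝ)))
          (convexHull ℝ (F : Set (Fin (2 * n) → ℝ))) ↔
        ((¬ V2 ⊆ F ∧ ¬ V3 ⊆ F) ∨ V2 ∪ V3 ⊆ F)) := by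
  intro F hFS hFne hFneS
  have hsub1 : V1 ⊆ S := by rw [← hunion]; intro v hv; simp [hv]
  have hsub2 : V2 ⊆ S := by rw [← hunion]; intro v hv; simp [hv]
  have hsub3 : V3 ⊆ S := by rw [← hunion]; intro v hv; simp [hv]
  have key := key_dep n S V1 V2 V3 hScard hunion hd12 hd13 hd23 hne2 hne3
    hsum1 hsum2 hsum3 hspan h12 h23
  have key' : ∀ α : (Fin (2 * n) → ℝ) → ℝ, ∑ v ∈ S, α v • v = 0 → ∑ v ∈ S, α v = 0 →
      ∃ c : ℝ, ∀ v ∈ S, α v = if v ∈ V3 then c else if v ∈ V2 then -c else 0 := by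
    intro α h1 h2
    obtain ⟨c, hc⟩ := key α h1 h2
    refine ⟨-c, fun v hv => ?_⟩
    rw [hc v hv]
    by_cases h2' : v ∈ V2
    · have h3' : v ∉ V3 := Finset.disjoint_left.mp hd23 h2'
      simp [h2', h3']
    · by_cases h3' : v ∈ V3 <;> simp [h2', h3']
  constructor
  · intro hext
    by_contra hcon
    have hcase : (V2 ⊆ F ∧ ¬ V3 ⊆ F) ∨ (V3 ⊆ F ∧ ¬ V2 ⊆ F) := by
      rcases Classical.em (V2 ⊆ F) with h2 | h2 <;> rcases Classical.em (V3 ⊆ F) with h3 | h3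
      · exact absurd (Or.inr (Finset.union_subset h2 h3)) hcon
      · exact Or.inl ⟨h2, h3⟩
      · exact Or.inr ⟨h3, h2⟩
      · exact absurd (Or.inl ⟨h2, h3⟩) hcon
    rcases hcase with ⟨h2F, h3F⟩ | ⟨h3F, h2F⟩
    · obtain ⟨w, hwB, hwF⟩ := Finset.not_subset.mp h3F
      exact side S F V2 V3 hFS hsub3 h2F hd23 (by omega) h23.symm
        (by rw [hsum2, hsum3]) key w hwB hwF hext
    · obtain ⟨w, hwB, hwF⟩ := Finset.not_subset.mp h2F
      exact side S F V3 V2 hFS hsub2 h3F hd23.symm (by omega) h23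
        (by rw [hsum2, hsum3]) key' w hwB hwF hext
  · intro hcond
    constructor
    · exact convexHull_mono (Finset.coe_subset.mpr hFS)
    · intro x1 hx1 x2 hx2 x hxF hseg
      obtain ⟨w1, h10, h11, h1e⟩ := hullrep hx1
      obtain ⟨w2, h20, h21, h2e⟩ := hullrep hx2
      obtain ⟨μ, hμ0, hμ1, hμe⟩ := hullrep hxF
      obtain ⟨a, b, ha, hb, hab, habx⟩ := hseg
      set α : (Fin (2 * n) → ℝ) → ℝ :=
        fun v => a * w1 v + b * w2 v - (if v ∈ F then μ v else 0) with hα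
      have eμ : ∑ v ∈ S, (if v ∈ F then μ v else 0) • v = ∑ v ∈ F, μ v • v := by
        rw [← Finset.sum_subset hFS (fun v _ hvF => by simp [hvF])]
        exact Finset.sum_congr rfl (fun v hv => by simp [hv])
      have eμ' : ∑ v ∈ S, (if v ∈ F then μ v else 0) = ∑ v ∈ F, μ v := by
        rw [← Finset.sum_subset hFS (fun v _ hvF => by simp [hvF])]
        exact Finset.sum_congr rfl (fun v hv => by simp [hv])
      have hα0 : ∑ v ∈ S, α v • v = 0 := by
        have e : ∑ v ∈ S, α v • v
            = a • ∑ v ∈ S, w1 v • v + b • ∑ v ∈ S, w2 v • v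
              - ∑ v ∈ S, (if v ∈ F then μ v else 0) • v := by
          rw [Finset.smul_sum, Finset.smul_sum, ← Finset.sum_add_distrib,
            ← Finset.sum_sub_distrib]
          exact Finset.sum_congr rfl (fun v _ => by
            simp [hα, sub_smul, add_smul, mul_smul])
        rw [e, h1e, h2e, eμ, hμe, habx, sub_self]
      have hαs : ∑ v ∈ S, α v = 0 := by
        have e : ∑ v ∈ S, α v
            = a * ∑ v ∈ S, w1 v + b * ∑ v ∈ S, w2 v
              - ∑ v ∈ S, (if v ∈ F then μ v else 0) := by
          rw [Finset.mul_sum, Finset.mul_sum, ← Finset.sum_add_distrib,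
            ← Finset.sum_sub_distrib]
        rw [e, h11, h21, eμ', hμ1]
        linarith
      obtain ⟨c, hc⟩ := key α hα0 hαs
      have hc0 : ∀ v ∈ S, v ∉ F → α v = 0 := by
        rcases hcond with ⟨h2, h3⟩ | hU
        · obtain ⟨u2, hu2, hu2F⟩ := Finset.not_subset.mp h2
          obtain ⟨u3, hu3, hu3F⟩ := Finset.not_subset.mp h3
          have hu3n2 : u3 ∉ V2 := Finset.disjoint_right.mp hd23 hu3
          have e2 := hc u2 (hsub2 hu2)
          have e3 := hc u3 (hsub3 hu3)
          rw [if_pos hu2] at e2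
          rw [if_neg hu3n2, if_pos hu3] at e3
          have hα2 : 0 ≤ α u2 := by
            simp only [hα, if_neg hu2F, sub_zero]
            have n1 := h10 u2 (hsub2 hu2)
            have n2 := h20 u2 (hsub2 hu2)
            have := mul_nonneg ha.le n1
            have := mul_nonneg hb.le n2
            linarith
          have hα3 : 0 ≤ α u3 := by
            simp only [hα, if_neg hu3F, sub_zero]
            have n1 := h10 u3 (hsub3 hu3)
            have n2 := h20 u3 (hsub3 hu3)
            have := mul_nonneg ha.le n1
            have := mul_nonneg hb.le n2
            linarith
          have hceq : c = 0 := by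
            rw [e2] at hα2
            rw [e3] at hα3
            linarith
          intro v hv _
          rw [hc v hv, hceq]
          simp
        · intro v hv hvF
          have hv2 : v ∉ V2 := fun h => hvF (hU (Finset.mem_union_left _ h))
          have hv3 : v ∉ V3 := fun h => hvF (hU (Finset.mem_union_right _ h))
          rw [hc v hv]
          simp [hv2, hv3]
      have hzero : ∀ v ∈ S, v ∉ F → a * w1 v + b * w2 v = 0 := by
        intro v hv hvF
        have h := hc0 v hv hvF
        simp only [hα, if_neg hvF, sub_zero] at h
        exact h
      have hz1 : ∀ v ∈ S, v ∉ F → w1 v = 0 := by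
        intro v hv hvF
        have h0 := hzero v hv hvF
        have n1 := h10 v hv
        have n2 := h20 v hv
        have t1 : a * w1 v = 0 := by nlinarith [mul_nonneg hb.le n2, mul_nonneg ha.le n1]
        exact (mul_eq_zero.mp t1).resolve_left (ne_of_gt ha)
      have hz2 : ∀ v ∈ S, v ∉ F → w2 v = 0 := by
        intro v hv hvF
        have h0 := hzero v hv hvF
        have n1 := h10 v hv
        have n2 := h20 v hv
        have t1 : b * w2 v = 0 := by nlinarith [mul_nonneg hb.le n2, mul_nonneg ha.le n1]
        exact (mul_eq_zero.mp t1).resolve_left (ne_of_gt hb)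
      · have e : ∑ v ∈ F, w1 v • v = x1 := by
          rw [← h1e]
          exact Finset.sum_subset hFS (fun v hv hvF => by rw [hz1 v hv hvF, zero_smul])
        have e' : ∑ v ∈ F, w1 v = 1 := by
          rw [← h11]
          exact Finset.sum_subset hFS (fun v hv hvF => hz1 v hv hvF)
        have h := hullmem F w1 (fun v hv => h10 v (hFS hv)) e'
        rwa [e] at h
end
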